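/- Let U ⊆ ℂ be open, let ℏ ∈ ℂ with ℏ ≠ 0, and let a, b, c : U → ℂ be holomorphic with c(z) ≠ 0 for every z ∈ U. Let r : U → ℂ be holomorphic with r(z)² = ℏ/c(z) for all z ∈ U (a holomorphic branch of √(ℏ/c)). Suppose ψ₁, ψ₂ : U → ℂ are differentiable on U and satisfy ℏ·ψ₁′(z) = a(z)ψ₁(z) + b(z)ψ₂(z) and ℏ·ψ₂′(z) = c(z)ψ₁(z) − a(z)ψ₂(z) for all z ∈ U. Then the function f := r·ψ₂ is twice differentiable on U and satisfies f″(z) = Q(z)·f(z) for all z ∈ U, where Q(z) = (a(z)² + b(z)c(z))/ℏ² + (a(z)·c′(z)/c(z) − a′(z))/ℏ + (3/4)·(c′(z)/c(z))² − (1/2)·c″(z)/c(z). -/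

import Mathlib

/-- Reduction of the 2×2 traceless first-order system `ℏΨ′ = R(z)Ψ`,
`R = [[a, b], [c, −a]]`, to the second-order scalar equation `f″ = Q f`
for `f = √(ℏ/c)·ψ₂`, with
`Q = (a² + bc)/ℏ² + (a·c′/c − a′)/ℏ + (3/4)(c′/c)² − (1/2)c″/c`. -/
theorem second_order_reduction
    (U : Set ℂ) (hU : IsOpen U) (ℏ : ℂ) (hℏ : ℏ ≠ 0)
    (a b c r ψ₁ ψ₂ a' c' c'' ψ₁' ψ₂' : ℂ → ℂ)
    (ha : ∀ z ∈ U, HasDerivAt a (a' z) z)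
    (hb : ∀ z ∈ U, DifferentiableAt ℂ b z)
    (hc : ∀ z ∈ U, HasDerivAt c (c' z) z)
    (hc' : ∀ z ∈ U, HasDerivAt c' (c'' z) z)
    (hcne : ∀ z ∈ U, c z ≠ 0)
    (hr : ∀ z ∈ U, DifferentiableAt ℂ r z)
    (hr2 : ∀ z ∈ U, (r z) ^ 2 = ℏ / c z)
    (hψ₁ : ∀ z ∈ U, HasDerivAt ψ₁ (ψ₁' z) z)
    (hψ₂ : ∀ z ∈ U, HasDerivAt ψ₂ (ψ₂' z) z)
    (heq₁ : ∀ z ∈ U, ℏ * ψ₁' z = a z * ψ₁ z + b z * ψ₂ z)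
    (heq₂ : ∀ z ∈ U, ℏ * ψ₂' z = c z * ψ₁ z - a z * ψ₂ z) :
    ∃ f' : ℂ → ℂ,
      (∀ z ∈ U, HasDerivAt (fun w => r w * ψ₂ w) (f' z) z) ∧
      (∀ z ∈ U, HasDerivAt f'
        (((a z ^ 2 + b z * c z) / ℏ ^ 2
          + (a z * c' z / c z - a' z) / ℏ
          + (3 / 4) * (c' z / c z) ^ 2
          - (1 / 2) * (c'' z / c z)) * (r z * ψ₂ z)) z) := by
  -- r is nonzero on U
  have hrne : ∀ z ∈ U, r z ≠ 0 := by
    intro z hz h0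
    have := hr2 z hz
    rw [h0] at this
    simp at this
    exact absurd (div_eq_zero_iff.mp this.symm) (by simp [hℏ, hcne z hz])
  -- derivative of r
  have hrd : ∀ z ∈ U, HasDerivAt r (-(c' z / (2 * c z)) * r z) z := by
    intro z hz
    have hd := (hr z hz).hasDerivAt
    have h1 : HasDerivAt (fun w => r w ^ 2) ((2:ℕ) * r z ^ 1 * deriv r z) z := hd.pow 2
    have h2 : HasDerivAt (fun w => ℏ / c w) ((0 * c z - ℏ * c' z) / c z ^ 2) z :=
      (hasDerivAt_const z ℏ).div (hc z hz) (hcne z hz)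
    have hev : (fun w => r w ^ 2) =ᶠ[nhds z] (fun w => ℏ / c w) :=
      Filter.eventuallyEq_of_mem (hU.mem_nhds hz) (fun w hw => hr2 w hw)
    have h1' : HasDerivAt (fun w => ℏ / c w) ((2:ℕ) * r z ^ 1 * deriv r z) z :=
      h1.congr_of_eventuallyEq hev.symm
    have huniq := h1'.unique h2
    have hℏeq : ℏ = r z ^ 2 * c z := by
      rw [hr2 z hz, div_mul_cancel₀ _ (hcne z hz)]
    have : deriv r z = -(c' z / (2 * c z)) * r z := by
      have hcz := hcne z hz
      have hrz := hrne z hz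
      rw [hℏeq] at huniq
      field_simp at huniq
      have h2ne : (2 : ℂ) * r z * c z ^ 2 ≠ 0 :=
        mul_ne_zero (mul_ne_zero two_ne_zero hrz) (pow_ne_zero 2 hcz)
      apply mul_left_cancel₀ h2ne
      have hrhs : 2 * r z * c z ^ 2 * (-(c' z / (2 * c z)) * r z)
          = -(r z ^ 2 * c z * c' z) := by
        field_simp
      rw [hrhs]
      linear_combination (c z) * huniq
    rwa [this] at hd
  refine ⟨fun z => -(c' z / (2 * c z)) * r z * ψ₂ z + r z * ψ₂' z, ?_, ?_⟩
  · intro z hz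
    exact (hrd z hz).mul (hψ₂ z hz)
  · intro z hz
    have hcz := hcne z hz
    have hrz := hrne z hz
    have hℏeq : ℏ = r z ^ 2 * c z := by
      rw [hr2 z hz, div_mul_cancel₀ _ (hcne z hz)]
    have h2cne : 2 * c z ≠ 0 := mul_ne_zero two_ne_zero hcz
    -- derivative of the substituted expression g
    have hA : HasDerivAt (fun w => c w * ψ₁ w - a w * ψ₂ w)
        (c' z * ψ₁ z + c z * ψ₁' z - (a' z * ψ₂ z + a z * ψ₂' z)) z :=
      ((hc z hz).mul (hψ₁ z hz)).sub ((ha z hz).mul (hψ₂ z hz))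
    have hB := (hrd z hz).mul (hA.div_const ℏ)
    have hC := (hc' z hz).mul ((hrd z hz).mul (hψ₂ z hz))
    have hden : HasDerivAt (fun w => 2 * c w) (2 * c' z) z := (hc z hz).const_mul 2
    have hD := hC.div hden h2cne
    have hG := hB.sub hD
    have hev : (fun w => -(c' w / (2 * c w)) * r w * ψ₂ w + r w * ψ₂' w)
        =ᶠ[nhds z] (fun w => r w * ((c w * ψ₁ w - a w * ψ₂ w) / ℏ)
          - c' w * (r w * ψ₂ w) / (2 * c w)) := by
      refine Filter.eventuallyEq_of_mem (hU.mem_nhds hz) (fun w hw => ?_)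
      have e2 : ψ₂' w = (c w * ψ₁ w - a w * ψ₂ w) / ℏ := by
        rw [eq_div_iff hℏ]; linear_combination heq₂ w hw
      rw [e2]
      have hcw := hcne w hw
      field_simp
      ring
    have hGf := hG.congr_of_eventuallyEq hev
    refine hGf.congr_deriv ?_
    have e1 : ψ₁' z = (a z * ψ₁ z + b z * ψ₂ z) / ℏ := by
      rw [eq_div_iff hℏ]; linear_combination heq₁ z hz
    have e2 : ψ₂' z = (c z * ψ₁ z - a z * ψ₂ z) / ℏ := by
      rw [eq_div_iff hℏ]; linear_combination heq₂ z hz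
    rw [e1, e2, hℏeq]
    have h2 : r z ^ 2 * c z ≠ 0 := by simp [hrz, hcz]
    field_simp
    simp only [Pi.mul_apply]
    ring
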